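/- Let A ∈ ℝ^{n×n} be symmetric positive-definite, M_0 ∈ ℝ^{n×n}, R_0 := I_n − A M_0, and i ≥ 1. Then a matrix M* ∈ M_0 + K_i(A, R_0) satisfies the Galerkin condition (I_n − AM*, V)_F = 0 for all V ∈ K_i(A, R_0) if and only if M* minimizes the A-weighted Frobenius norm of the error over the affine Krylov subspace: ‖A⁻¹ − M*‖_{F,A} = min { ‖A⁻¹ − M‖_{F,A} : M ∈ M_0 + K_i(A, R_0) }. -/

import Mathlib

open Matrix

/-- Frobenius inner product `(X,Y)_F = trace (Xᵀ Y)`. -/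
noncomputable def finner {n : ℕ} (X Y : Matrix (Fin n) (Fin n) ℝ) : ℝ :=
  (Xᵀ * Y).trace

/-- Frobenius norm `‖X‖_F`. -/
noncomputable def fnorm {n : ℕ} (X : Matrix (Fin n) (Fin n) ℝ) : ℝ :=
  Real.sqrt (finner X X)

/-- A-weighted Frobenius inner product `(X,Y)_{F,A} = trace (Xᵀ A Y)`. -/
noncomputable def finnerA {n : ℕ} (A X Y : Matrix (Fin n) (Fin n) ℝ) : ℝ :=
  (Xᵀ * A * Y).trace

/-- A-weighted Frobenius norm `‖X‖_{F,A}`. -/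
noncomputable def fnormA {n : ℕ} (A X : Matrix (Fin n) (Fin n) ℝ) : ℝ :=
  Real.sqrt (finnerA A X X)

/-- Krylov subspace `K_i(B, X) = span {X, BX, …, B^(i-1) X}`. -/
noncomputable def krylov {n : ℕ} (i : ℕ) (B X : Matrix (Fin n) (Fin n) ℝ) :
    Submodule ℝ (Matrix (Fin n) (Fin n) ℝ) :=
  Submodule.span ℝ {Y | ∃ j < i, Y = B ^ j * X}

lemma finnerA_self_nonneg {n : ℕ} {A : Matrix (Fin n) (Fin n) ℝ} (hA : A.PosDef)
    (X : Matrix (Fin n) (Fin n) ℝ) : 0 ≤ finnerA A X X := by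
  have h := hA.posSemidef
  unfold finnerA
  rw [Matrix.trace]
  apply Finset.sum_nonneg
  intro j _
  have h2 := h.dotProduct_mulVec_nonneg (fun k => X k j)
  simp only [RCLike.re_to_real, star_trivial] at h2
  have h2' : (0:ℝ) ≤ ∑ x : Fin n, ∑ y : Fin n, A x y * (X x j * X y j) := by
    simpa [dotProduct, Matrix.mulVec, Finset.mul_sum, mul_comm, mul_assoc, mul_left_comm] using h2
  refine le_of_le_of_eq h2' ?_
  rw [Finset.sum_comm]
  simp only [Matrix.diag, Matrix.mul_apply, Matrix.transpose_apply, Finset.sum_mul]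
  exact Finset.sum_congr rfl fun x _ => Finset.sum_congr rfl fun y _ => by ring

lemma finnerA_comm {n : ℕ} {A : Matrix (Fin n) (Fin n) ℝ} (hAs : Aᵀ = A)
    (X Y : Matrix (Fin n) (Fin n) ℝ) : finnerA A X Y = finnerA A Y X := by
  unfold finnerA
  conv_lhs => rw [← Matrix.trace_transpose]
  rw [Matrix.transpose_mul, Matrix.transpose_mul, Matrix.transpose_transpose, hAs, Matrix.mul_assoc]

lemma finnerA_add_right {n : ℕ} (A X Y Z : Matrix (Fin n) (Fin n) ℝ) :
    finnerA A X (Y + Z) = finnerA A X Y + finnerA A X Z := by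
  simp [finnerA, mul_add]

lemma finnerA_smul_right {n : ℕ} (A X Y : Matrix (Fin n) (Fin n) ℝ) (t : ℝ) :
    finnerA A X (t • Y) = t * finnerA A X Y := by
  simp [finnerA, Matrix.mul_smul]

lemma finnerA_expand {n : ℕ} {A : Matrix (Fin n) (Fin n) ℝ} (hAs : Aᵀ = A)
    (E W : Matrix (Fin n) (Fin n) ℝ) :
    finnerA A (E + W) (E + W) = finnerA A E E + 2 * finnerA A E W + finnerA A W W := by
  have h1 : finnerA A (E + W) (E + W) = finnerA A (E+W) E + finnerA A (E+W) W :=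
    finnerA_add_right ..
  rw [h1, finnerA_comm hAs (E+W) E, finnerA_comm hAs (E+W) W,
    finnerA_add_right, finnerA_add_right, finnerA_comm hAs W E]
  ring

/-- Optimality of CG iterates: a matrix in the affine Krylov subspace of A
satisfies the Galerkin condition iff it minimizes the A-weighted Frobenius norm
of the error over that affine subspace. -/
theorem cg_galerkin_iff_optimal {n : ℕ}
    (A M₀ Mstar : Matrix (Fin n) (Fin n) ℝ) (hA : A.PosDef)
    (R₀ : Matrix (Fin n) (Fin n) ℝ) (hR₀ : R₀ = 1 - A * M₀)
    (i : ℕ) (hi : 1 ≤ i)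
    (hMstar : ∃ V ∈ krylov i A R₀, Mstar = M₀ + V) :
    (∀ V ∈ krylov i A R₀, finner (1 - A * Mstar) V = 0) ↔
      (∀ M : Matrix (Fin n) (Fin n) ℝ, (∃ V ∈ krylov i A R₀, M = M₀ + V) →
        fnormA A (A⁻¹ - Mstar) ≤ fnormA A (A⁻¹ - M)) := by
  have hAs : Aᵀ = A := by simpa using hA.1.eq
  have hinv : A * A⁻¹ = 1 := A.mul_nonsing_inv (isUnit_iff_ne_zero.mpr hA.det_pos.ne')
  set E := A⁻¹ - Mstar with hE
  have key : ∀ V : Matrix (Fin n) (Fin n) ℝ, finner (1 - A * Mstar) V = finnerA A E V := by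
    intro V
    have h1 : Eᵀ * A = (1 - A * Mstar)ᵀ := by
      calc Eᵀ * A = (A * E)ᵀ := by rw [Matrix.transpose_mul, hAs]
        _ = (1 - A * Mstar)ᵀ := by rw [hE, Matrix.mul_sub, hinv]
    unfold finner finnerA
    rw [h1]
  obtain ⟨Vs, hVs, hMs⟩ := hMstar
  constructor
  · intro horth M ⟨V, hV, hM⟩
    have hW : Vs - V ∈ krylov i A R₀ := sub_mem hVs hV
    have hdiff : A⁻¹ - M = E + (Vs - V) := by rw [hE, hMs, hM]; abel
    have hzero : finnerA A E (Vs - V) = 0 := by rw [← key]; exact horth _ hW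
    unfold fnormA
    apply Real.sqrt_le_sqrt
    rw [hdiff, finnerA_expand hAs, hzero]
    have := finnerA_self_nonneg hA (Vs - V)
    linarith
  · intro hmin V hV
    set c := finnerA A E V with hc
    have hq : 0 ≤ finnerA A V V := finnerA_self_nonneg hA V
    have key2 : ∀ t : ℝ, 0 ≤ 2 * t * c + t ^ 2 * finnerA A V V := by
      intro t
      have hmem : Vs - t • V ∈ krylov i A R₀ := sub_mem hVs (Submodule.smul_mem _ t hV)
      have h := hmin (M₀ + (Vs - t • V)) ⟨Vs - t • V, hmem, rfl⟩
      have hdiff : A⁻¹ - (M₀ + (Vs - t • V)) = E + t • V := by rw [hE, hMs]; abel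
      unfold fnormA at h
      rw [hdiff, Real.sqrt_le_sqrt_iff (finnerA_self_nonneg hA _),
        finnerA_expand hAs, finnerA_smul_right] at h
      have h2 : finnerA A (t • V) (t • V) = t ^ 2 * finnerA A V V := by
        rw [finnerA_smul_right, finnerA_comm hAs, finnerA_smul_right, finnerA_comm hAs]
        ring
      rw [h2] at h
      rw [← hc] at h
      linarith
    have hc0 : c = 0 := by
      have h := key2 (-c / (finnerA A V V + 1))
      have hu : (0:ℝ) < finnerA A V V + 1 := by linarith
      field_simp at h
      rw [zero_mul] at h
      have hsq : c ^ 2 ≤ 0 := by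
        nlinarith [mul_nonneg (mul_nonneg (sq_nonneg c) hq) hq, mul_nonneg (sq_nonneg c) hq]
      have h0 : c ^ 2 = 0 := le_antisymm hsq (sq_nonneg c)
      exact pow_eq_zero_iff (by norm_num : (2:ℕ) ≠ 0) |>.mp h0
    rw [key]
    exact hc0
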